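/- Let b ∈ B have infinite order and let (f,b), (g,c) ∈ A ≀ B. Suppose z ∈ B satisfies bz = zc and for every t in a set of right-coset representatives of ⟨b⟩ in B, π_t^{(z)}(g) = π_t(f). Define h : B → A by h(b^k t) = (∏_{j ≤ k} f(b^j t)) · (∏_{j ≤ k} g(z^{-1}b^j t))^{-1} for each coset representative t and each k ∈ ℤ. Then h has finite support and (f,b)(h,z) = (h,z)(g,c) in A ≀ B; in particular (f,b) and (g,c) are conjugate. -/

import Mathlib

/-- Multiplication in the restricted wreath product `A ≀ B`:
`(f,b)(g,c) = (f · g^b, bc)` where `g^b (x) = g (b⁻¹ x)`. -/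
def wmul {A B : Type*} [Group A] [Group B] (p q : (B → A) × B) : (B → A) × B :=
  (fun x => p.1 x * q.1 (p.2⁻¹ * x), p.2 * q.2)

/-- The ordered product `F(M) · F(M-1) · ⋯ · F(-M)` (larger indices on the left). -/
def orderedProd {A : Type*} [Group A] (F : ℤ → A) (M : ℕ) : A :=
  ((List.range (2 * M + 1)).map (fun i => F ((M : ℤ) - i))).prod

/-- The ordered product `F(0) · F(-1) · ⋯ · F(-M)` (larger indices on the left),
a truncation of `∏_{j ≤ 0} F(j)`. -/
def lowerProd {A : Type*} [Group A] (F : ℤ → A) (M : ℕ) : A :=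
  ((List.range (M + 1)).map (fun i => F (-(i : ℤ)))).prod

lemma lowerProd_eq {A : Type*} [Group A] (F : ℤ → A) (M : ℕ) :
    lowerProd F M = ((List.range (M + 1)).map (fun i : ℕ => F (-(i : ℤ)))).prod := by
  unfold lowerProd
  rw [show (do let a ← List.range (M + 1); pure ((a : ℕ) : ℤ))
      = (List.range (M + 1)).map (fun a : ℕ => (a : ℤ)) from List.map_eq_flatMap.symm,
    List.map_map]
  rfl

lemma orderedProd_eq {A : Type*} [Group A] (F : ℤ → A) (M : ℕ) :
    orderedProd F M = ((List.range (2 * M + 1)).map (fun i : ℕ => F ((M : ℤ) - i))).prod := by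
  unfold orderedProd
  rw [show (do let a ← List.range (2 * M + 1); pure ((a : ℕ) : ℤ))
      = (List.range (2 * M + 1)).map (fun a : ℕ => (a : ℤ)) from List.map_eq_flatMap.symm,
    List.map_map]
  rfl

lemma lowerProd_zero {A : Type*} [Group A] (F : ℤ → A) :
    lowerProd F 0 = F 0 := by
  rw [lowerProd_eq]
  simp [List.range_succ]

lemma lowerProd_succ {A : Type*} [Group A] (F : ℤ → A) (M : ℕ) :
    lowerProd F (M + 1) = lowerProd F M * F (-((M : ℤ) + 1)) := by
  rw [lowerProd_eq, lowerProd_eq, List.range_succ, List.map_append, List.prod_append]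
  simp

lemma lowerProd_cons {A : Type*} [Group A] (F : ℤ → A) (M : ℕ) :
    lowerProd F (M + 1) = F 0 * lowerProd (fun j => F (j - 1)) M := by
  rw [lowerProd_eq, lowerProd_eq, List.range_succ_eq_map, List.map_cons, List.prod_cons,
    List.map_map]
  norm_num
  congr 1
  apply List.map_congr_left
  intro i _
  simp [Function.comp]
  congr 1
  ring

lemma lowerProd_congr_of_one {A : Type*} [Group A] (F : ℤ → A) (M : ℕ)
    (h1 : ∀ j : ℕ, M < j → F (-(j : ℤ)) = 1) :
    ∀ M' : ℕ, M ≤ M' → lowerProd F M' = lowerProd F M := by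
  intro M' hle
  induction M', hle using Nat.le_induction with
  | base => rfl
  | succ n hn ih =>
    rw [lowerProd_succ, ih]
    have := h1 (n + 1) (by omega)
    push_cast at this
    rw [this, mul_one]

lemma lowerProd_top_ext {A : Type*} [Group A] (F : ℤ → A) (k : ℤ)
    (hF : ∀ i : ℤ, k < i → F i = 1) :
    ∀ (n M : ℕ), lowerProd (fun j => F (j + k + n)) (M + n)
      = lowerProd (fun j => F (j + k)) M := by
  intro n
  induction n with
  | zero => intro M; simp
  | succ n ih =>
    intro M
    have hc := lowerProd_cons (fun j => F (j + k + (n + 1 : ℕ))) (M + n)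
    have hre : M + (n + 1) = (M + n) + 1 := by omega
    rw [hre, hc]
    have h0 : F ((0 : ℤ) + k + (n + 1 : ℕ)) = 1 := by
      apply hF; push_cast; omega
    rw [h0, one_mul]
    have he : (fun j : ℤ => F (j - 1 + k + (n + 1 : ℕ))) = fun j : ℤ => F (j + k + (n : ℕ)) := by
      funext j; congr 1; push_cast; ring
    rw [he, ih]

lemma orderedProd_eq_lowerProd {A : Type*} [Group A] (F : ℤ → A) (M : ℕ) :
    orderedProd F M = lowerProd (fun j => F (j + M)) (2 * M) := by
  rw [orderedProd_eq, lowerProd_eq]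
  congr 1
  apply List.map_congr_left
  intro i _
  congr 1
  ring

lemma key_lemma {A : Type*} [Group A] (F : ℤ → A) (N : ℕ)
    (hF : ∀ m : ℤ, (N : ℤ) < |m| → F m = 1) (k : ℤ) (hk : (N : ℤ) < k) :
    lowerProd (fun j => F (j + k)) (k.toNat + N) = orderedProd F (k.toNat + N) := by
  have hk0 : (k.toNat : ℤ) = k := Int.toNat_of_nonneg (by omega)
  set M := k.toNat + N with hM
  rw [orderedProd_eq_lowerProd]
  rw [lowerProd_congr_of_one (fun j => F (j + M)) (M + N) ?bot (2 * M) (by omega)]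
  case bot =>
    intro j hj
    apply hF
    have h1 : -(j : ℤ) + M < -(N : ℤ) := by push_cast [hM] at hj ⊢; omega
    rw [abs_of_neg (by omega)]
    omega
  have he : (fun j : ℤ => F (j + M)) = fun j : ℤ => F (j + k + (N : ℕ)) := by
    funext j; congr 1; push_cast [hM]; omega
  rw [he]
  exact (lowerProd_top_ext F k
    (fun i hi => hF i (by rw [abs_of_pos (by omega)]; omega)) N M).symm


/-- Let `b ∈ B` have infinite order and `(f,b), (g,c) ∈ A ≀ B`.
Suppose `z ∈ B` satisfies `bz = zc` and `π_t^{(z)}(g) = π_t(f)` for every `t`.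
If `h : B → A` is given by `h(bᵏt) = (∏_{j ≤ k} f(bʲt)) · (∏_{j ≤ k} g(z⁻¹bʲt))⁻¹`
(equivalently `h(x) = (∏_{j ≤ 0} f(bʲx)) · (∏_{j ≤ 0} g(z⁻¹bʲx))⁻¹` for all `x`,
the products being stable truncations), then `h` has finite support and
`(f,b)(h,z) = (h,z)(g,c)`; in particular `(f,b)` and `(g,c)` are conjugate. -/
theorem wreath_conj_construction {A B : Type*} [Group A] [Group B]
    (f g h : B → A) (b c z : B)
    (hf : (Function.mulSupport f).Finite)
    (hg : (Function.mulSupport g).Finite)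
    (hb : ∀ k : ℤ, b ^ k = 1 → k = 0)
    (hzc : b * z = z * c)
    (hpi : ∀ t : B, ∀ M : ℕ, (∀ j : ℤ, (M : ℤ) < |j| →
        f (b ^ j * t) = 1 ∧ g (z⁻¹ * b ^ j * t) = 1) →
      orderedProd (fun j => f (b ^ j * t)) M
        = orderedProd (fun j => g (z⁻¹ * b ^ j * t)) M)
    (hdef : ∀ x : B, ∀ M : ℕ, (∀ j : ℤ, (M : ℤ) < j →
        f (b ^ (-j) * x) = 1 ∧ g (z⁻¹ * b ^ (-j) * x) = 1) →
      h x = lowerProd (fun j => f (b ^ j * x)) M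
        * (lowerProd (fun j => g (z⁻¹ * b ^ j * x)) M)⁻¹) :
    (Function.mulSupport h).Finite ∧ wmul (f, b) (h, z) = wmul (h, z) (g, c) := by
  classical
  have hinj : ∀ s : B, Function.Injective (fun j : ℤ => b ^ j * s) := by
    intro s i j hij
    simp only at hij
    have hb1 : b ^ i = b ^ j := mul_right_cancel hij
    have hz : b ^ (i - j) = 1 := by
      rw [zpow_sub, hb1]
      exact mul_inv_eq_one.mpr rfl
    have := hb _ hz
    omega
  have hone : ∀ s : B, ∃ N : ℕ, ∀ j : ℤ, (N : ℤ) < |j| →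
      f (b ^ j * s) = 1 ∧ g (z⁻¹ * b ^ j * s) = 1 := by
    intro s
    have hUfin : (Function.mulSupport f ∪ (fun y => z * y) '' Function.mulSupport g).Finite :=
      hf.union (hg.image _)
    have hfin : ((fun j : ℤ => b ^ j * s) ⁻¹'
        (Function.mulSupport f ∪ (fun y => z * y) '' Function.mulSupport g)).Finite :=
      hUfin.preimage (hinj s).injOn
    refine ⟨hfin.toFinset.sup Int.natAbs, fun j hj => ?_⟩
    have hnot : b ^ j * s ∉
        (Function.mulSupport f ∪ (fun y => z * y) '' Function.mulSupport g) := by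
      intro hmem
      have h1 : j.natAbs ≤ hfin.toFinset.sup Int.natAbs :=
        Finset.le_sup (hfin.mem_toFinset.mpr hmem)
      rw [Int.abs_eq_natAbs] at hj
      omega
    constructor
    · by_contra h1
      exact hnot (Or.inl h1)
    · by_contra h1
      refine hnot (Or.inr ⟨z⁻¹ * b ^ j * s, h1, ?_⟩)
      group
  constructor
  · -- finite support
    choose N hN using hone
    have hUfin : (Function.mulSupport f ∪ (fun y => z * y) '' Function.mulSupport g).Finite :=
      hf.union (hg.image _)
    apply Set.Finite.subset (hUfin.biUnion
      (fun s _ => (Set.finite_Icc (-(N s) : ℤ) (N s)).image (fun k => b ^ k * s)))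
    intro x hx
    have hx' : h x ≠ 1 := hx
    have hex : ∃ j : ℤ, b ^ j * x ∈
        (Function.mulSupport f ∪ (fun y => z * y) '' Function.mulSupport g) := by
      by_contra hc
      push_neg at hc
      have hfm : ∀ m : ℤ, f (b ^ m * x) = 1 := by
        intro m; by_contra h1; exact hc m (Or.inl h1)
      have hgm : ∀ m : ℤ, g (z⁻¹ * b ^ m * x) = 1 := by
        intro m
        by_contra h1
        exact hc m (Or.inr ⟨z⁻¹ * b ^ m * x, h1, by group⟩)
      have hde := hdef x 0 (fun j _ => ⟨hfm _, hgm _⟩)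
      simp only [lowerProd_zero] at hde
      rw [hfm 0, hgm 0] at hde
      simp at hde
      exact hx' hde
    obtain ⟨j₀, hj₀⟩ := hex
    have hxeq : x = b ^ (-j₀) * (b ^ j₀ * x) := by group
    set s := b ^ j₀ * x with hs
    set k : ℤ := -j₀ with hk
    have hFx : ∀ m : ℤ, f (b ^ m * x) = f (b ^ (m + k) * s) := by
      intro m
      congr 1
      rw [zpow_add, mul_assoc, hk, hs]
      group
    have hGx : ∀ m : ℤ, g (z⁻¹ * b ^ m * x) = g (z⁻¹ * b ^ (m + k) * s) := by
      intro m
      congr 1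
      rw [zpow_add, hk, hs]
      group
    have hkIcc : k ∈ Set.Icc (-(N s) : ℤ) (N s) := by
      rw [Set.mem_Icc]
      constructor
      · -- lower bound
        by_contra hlow
        push_neg at hlow
        apply hx'
        have hcond0 : ∀ j : ℤ, ((0 : ℕ) : ℤ) < j →
            f (b ^ (-j) * x) = 1 ∧ g (z⁻¹ * b ^ (-j) * x) = 1 := by
          intro j hj
          push_cast at hj
          have habs : (N s : ℤ) < |(-j) + k| := by
            rw [abs_of_neg (by omega)]; omega
          exact ⟨by rw [hFx]; exact (hN s _ habs).1, by rw [hGx]; exact (hN s _ habs).2⟩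
        have hde := hdef x 0 hcond0
        simp only [lowerProd_zero] at hde
        rw [hde, hFx 0, hGx 0]
        have habs : (N s : ℤ) < |0 + k| := by rw [abs_of_neg (by omega)]; omega
        rw [(hN s _ habs).1, (hN s _ habs).2]
        simp
      · -- upper bound
        by_contra hhigh
        push_neg at hhigh
        apply hx'
        have hk0 : (k.toNat : ℤ) = k := Int.toNat_of_nonneg (by omega)
        have hcond : ∀ j : ℤ, ((k.toNat + N s : ℕ) : ℤ) < j →
            f (b ^ (-j) * x) = 1 ∧ g (z⁻¹ * b ^ (-j) * x) = 1 := by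
          intro j hj
          push_cast at hj
          have habs : (N s : ℤ) < |(-j) + k| := by
            rw [abs_of_neg (by omega)]; omega
          exact ⟨by rw [hFx]; exact (hN s _ habs).1, by rw [hGx]; exact (hN s _ habs).2⟩
        have hde := hdef x (k.toNat + N s) hcond
        have e1 : (fun j : ℤ => f (b ^ j * x)) = fun j => f (b ^ (j + k) * s) :=
          funext fun m => hFx m
        have e2 : (fun j : ℤ => g (z⁻¹ * b ^ j * x)) = fun j => g (z⁻¹ * b ^ (j + k) * s) :=
          funext fun m => hGx m
        rw [e1, e2,
          key_lemma (fun m => f (b ^ m * s)) (N s) (fun m hm => (hN s m hm).1) k hhigh,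
          key_lemma (fun m => g (z⁻¹ * b ^ m * s)) (N s) (fun m hm => (hN s m hm).2) k hhigh]
          at hde
        rw [hde]
        apply mul_inv_eq_one.mpr
        apply hpi s (k.toNat + N s)
        intro j hj
        apply hN s
        push_cast at hj
        rcases abs_cases j with ⟨h1, h2⟩ | ⟨h1, h2⟩ <;> omega
    exact Set.mem_biUnion hj₀ ⟨k, hkIcc, hxeq.symm⟩
  · -- the conjugation identity
    unfold wmul
    simp only [Prod.mk.injEq]
    refine ⟨?_, hzc⟩
    funext x
    obtain ⟨N, hN⟩ := hone x
    have hcx : ∀ j : ℤ, ((N + 1 : ℕ) : ℤ) < j →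
        f (b ^ (-j) * x) = 1 ∧ g (z⁻¹ * b ^ (-j) * x) = 1 := by
      intro j hj
      push_cast at hj
      exact hN (-j) (by rw [abs_of_neg (by omega)]; omega)
    have hdx := hdef x (N + 1) hcx
    have hcx' : ∀ j : ℤ, ((N : ℕ) : ℤ) < j →
        f (b ^ (-j) * (b⁻¹ * x)) = 1 ∧ g (z⁻¹ * b ^ (-j) * (b⁻¹ * x)) = 1 := by
      intro j hj
      have e1 : b ^ (-j) * (b⁻¹ * x) = b ^ (-(j + 1)) * x := by group
      have e2 : z⁻¹ * b ^ (-j) * (b⁻¹ * x) = z⁻¹ * b ^ (-(j + 1)) * x := by group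
      rw [e1, e2]
      exact hN (-(j + 1)) (by rw [abs_of_neg (by omega)]; omega)
    have hdx' := hdef (b⁻¹ * x) N hcx'
    have ef : (fun j : ℤ => f (b ^ j * (b⁻¹ * x))) = fun j => f (b ^ (j - 1) * x) := by
      funext j; congr 1; group
    have eg : (fun j : ℤ => g (z⁻¹ * b ^ j * (b⁻¹ * x)))
        = fun j => g (z⁻¹ * b ^ (j - 1) * x) := by
      funext j; congr 1; group
    rw [ef, eg] at hdx'
    simp only [lowerProd_cons, zpow_zero, one_mul, mul_one] at hdx
    rw [hdx, hdx']
    group
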